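/- Let A be a smooth and structured-decomposable probabilistic circuit over variables X respecting a vtree V, and let A_aug be its augmented PC over X ∪ Z, where Z = {Z_v : v an inner node of V}. Then for every assignment x of X, p_A(x) = Σ_z p_{A_aug}(x, z), where the sum ranges over all joint assignments z of the latent variables Z. -/

import Mathlib

open scoped BigOperators

/-! ### Probabilistic circuits

A probabilistic circuit is a rooted DAG of leaf, sum and product nodes.  We represent the
DAG by a finite sequence of nodes; well-formedness (`PC.WF`) requires that the children of
every node have strictly smaller index, and the root is the node of largest index. -/

inductive PCNode (ι : Type) (Val : ι → Type) (N : ℕ) where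
  | leaf (v : ι) (f : Val v → ℝ)
  | sum (ch : List (Fin N × ℝ))
  | prod (ch : List (Fin N))

namespace PCNode

variable {ι : Type} {Val : ι → Type} {N : ℕ}

def children : PCNode ι Val N → List (Fin N)
  | .leaf _ _ => []
  | .sum ch => ch.map Prod.fst
  | .prod ch => ch

def childCount : PCNode ι Val N → ℕ
  | .leaf _ _ => 0
  | .sum ch => ch.length
  | .prod ch => ch.length

def isProdB : PCNode ι Val N → Bool
  | .prod _ => true
  | _ => false

end PCNode

structure PC (ι : Type) (Val : ι → Type) where
  numNodes : ℕ
  node : Fin numNodes → PCNode ι Val numNodes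

namespace PC

variable {ι : Type} {Val : ι → Type}

/-- Acyclicity: every edge goes from a larger to a strictly smaller index. -/
def WF (C : PC ι Val) : Prop :=
  ∀ i : Fin C.numNodes, ∀ j ∈ (C.node i).children, (j : ℕ) < (i : ℕ)

/-- Fuelled evaluation of a node; for a well-formed circuit, fuel `C.numNodes` always
suffices. -/
def evalFuel (C : PC ι Val) (x : ∀ i, Val i) : ℕ → Fin C.numNodes → ℝ
  | 0, _ => 0
  | k+1, i =>
    match C.node i with
    | .leaf v f => f (x v)
    | .sum ch => (ch.map fun p => p.2 * evalFuel C x k p.1).sum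
    | .prod ch => (ch.map fun j => evalFuel C x k j).prod

def nodeEval (C : PC ι Val) (x : ∀ i, Val i) (i : Fin C.numNodes) : ℝ :=
  evalFuel C x C.numNodes i

/-- The function computed by the circuit (the value of its root node). -/
def eval (C : PC ι Val) (x : ∀ i, Val i) : ℝ :=
  if h : 0 < C.numNodes then nodeEval C x ⟨C.numNodes - 1, by omega⟩ else 0

def scopeFuel [DecidableEq ι] (C : PC ι Val) : ℕ → Fin C.numNodes → Finset ι
  | 0, _ => ∅
  | k+1, i =>
    match C.node i with
    | .leaf v _ => {v}
    | .sum ch => (ch.map fun p => scopeFuel C k p.1).foldr (· ∪ ·) ∅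
    | .prod ch => (ch.map fun j => scopeFuel C k j).foldr (· ∪ ·) ∅

/-- The scope of a node: the set of variables its subcircuit depends on. -/
def scope [DecidableEq ι] (C : PC ι Val) (i : Fin C.numNodes) : Finset ι :=
  scopeFuel C C.numNodes i

def rootScope [DecidableEq ι] (C : PC ι Val) : Finset ι :=
  if h : 0 < C.numNodes then scope C ⟨C.numNodes - 1, by omega⟩ else ∅

/-- The size of a circuit: its number of edges. -/
def numEdges (C : PC ι Val) : ℕ :=
  ∑ i : Fin C.numNodes, (C.node i).childCount

def depthFuel (C : PC ι Val) : ℕ → Fin C.numNodes → ℕ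
  | 0, _ => 0
  | k+1, i =>
    match C.node i with
    | .leaf _ _ => 0
    | .sum ch => (ch.map fun p => depthFuel C k p.1 + 1).foldr max 0
    | .prod ch => (ch.map fun j => depthFuel C k j + 1).foldr max 0

/-- The depth of a circuit: the length of the longest root-to-leaf path. -/
def depth (C : PC ι Val) : ℕ :=
  if h : 0 < C.numNodes then depthFuel C C.numNodes ⟨C.numNodes - 1, by omega⟩ else 0

/-- All children of any sum node have the same scope. -/
def Smooth [DecidableEq ι] (C : PC ι Val) : Prop :=
  ∀ (i : Fin C.numNodes) (ch : List (Fin C.numNodes × ℝ)), C.node i = .sum ch →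
    ∀ p ∈ ch, ∀ q ∈ ch, scope C p.1 = scope C q.1

/-- The children of any product node have pairwise disjoint scopes. -/
def Decomposable [DecidableEq ι] (C : PC ι Val) : Prop :=
  ∀ (i : Fin C.numNodes) (ch : List (Fin C.numNodes)), C.node i = .prod ch →
    ch.Pairwise fun a b => Disjoint (scope C a) (scope C b)

/-- Sum-node weights and leaf functions are nonnegative. -/
def NonnegWeights (C : PC ι Val) : Prop :=
  (∀ (i : Fin C.numNodes) (ch : List (Fin C.numNodes × ℝ)), C.node i = .sum ch →
      ∀ p ∈ ch, 0 ≤ p.2) ∧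
  (∀ (i : Fin C.numNodes) (v : ι) (f : Val v → ℝ), C.node i = .leaf v f → ∀ a, 0 ≤ f a)

/-- The weights of every sum node sum to one. -/
def NormalizedSums (C : PC ι Val) : Prop :=
  ∀ (i : Fin C.numNodes) (ch : List (Fin C.numNodes × ℝ)), C.node i = .sum ch →
    (ch.map Prod.snd).sum = 1

/-- Every leaf computes a probability distribution over its variable. -/
def NormalizedLeaves [∀ i, Fintype (Val i)] (C : PC ι Val) : Prop :=
  ∀ (i : Fin C.numNodes) (v : ι) (f : Val v → ℝ), C.node i = .leaf v f → ∑ a, f a = 1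

/-- Sum/leaf and product nodes alternate: children of sums are products and children of
products are sums or leaves. -/
def Alternating (C : PC ι Val) : Prop :=
  (∀ (i : Fin C.numNodes) (ch : List (Fin C.numNodes × ℝ)), C.node i = .sum ch →
      ∀ p ∈ ch, (C.node p.1).isProdB = true) ∧
  (∀ (i : Fin C.numNodes) (ch : List (Fin C.numNodes)), C.node i = .prod ch →
      ∀ j ∈ ch, (C.node j).isProdB = false)

/-- For every input, at most one child of each sum node evaluates to a nonzero value. -/
def Deterministic (C : PC ι Val) : Prop :=
  ∀ (x : ∀ i, Val i) (i : Fin C.numNodes) (ch : List (Fin C.numNodes × ℝ)),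
    C.node i = .sum ch → ∀ p ∈ ch, ∀ q ∈ ch,
      nodeEval C x p.1 ≠ 0 → nodeEval C x q.1 ≠ 0 → p.1 = q.1

/-- The number of product nodes with a given scope. -/
def prodCount [DecidableEq ι] (C : PC ι Val) (S : Finset ι) : ℕ :=
  (Finset.univ.filter fun i : Fin C.numNodes =>
    (C.node i).isProdB = true ∧ scope C i = S).card

/-- The index of a product node within the product nodes sharing its scope. -/
def idxOf [DecidableEq ι] (C : PC ι Val) (i : Fin C.numNodes) : ℕ :=
  (Finset.univ.filter fun j : Fin C.numNodes =>
    (j : ℕ) < (i : ℕ) ∧ (C.node j).isProdB = true ∧ scope C j = scope C i).card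

/-- Bundle of basic "probabilistic circuit over all the variables" conditions:
well-formed DAG, nonnegative normalized weights, normalized leaves, alternation of
sum/leaf and product nodes, and the root depending on all variables. -/
def IsPCOver [DecidableEq ι] [Fintype ι] [∀ i, Fintype (Val i)] (C : PC ι Val) : Prop :=
  C.WF ∧ C.NonnegWeights ∧ C.NormalizedSums ∧ C.NormalizedLeaves ∧ C.Alternating ∧
    C.rootScope = Finset.univ

end PC

/-! ### Vtrees -/

inductive Vtree (ι : Type) where
  | leaf (x : ι)
  | node (l r : Vtree ι)
deriving DecidableEq

namespace Vtree

variable {ι : Type}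

def varsFinset [DecidableEq ι] : Vtree ι → Finset ι
  | .leaf x => {x}
  | .node l r => varsFinset l ∪ varsFinset r

def leavesList : Vtree ι → List ι
  | .leaf x => [x]
  | .node l r => leavesList l ++ leavesList r

/-- A vtree over a set `S` of variables: its leaves are in bijection with `S`. -/
def ValidOver (T : Vtree ι) (S : Set ι) : Prop :=
  T.leavesList.Nodup ∧ ∀ x : ι, x ∈ T.leavesList ↔ x ∈ S

def numNodesV : Vtree ι → ℕ
  | .leaf _ => 1
  | .node l r => numNodesV l + numNodesV r + 1

def IsChildOf (c p : Vtree ι) : Prop :=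
  match p with
  | .leaf _ => False
  | .node l r => c = l ∨ c = r

inductive IsSubtreeOf : Vtree ι → Vtree ι → Prop
  | refl (t : Vtree ι) : IsSubtreeOf t t
  | left {s l r : Vtree ι} : IsSubtreeOf s l → IsSubtreeOf s (.node l r)
  | right {s l r : Vtree ι} : IsSubtreeOf s r → IsSubtreeOf s (.node l r)

def subtreesList : Vtree ι → List (Vtree ι)
  | .leaf x => [.leaf x]
  | .node l r => .node l r :: (subtreesList l ++ subtreesList r)

def isNodeB : Vtree ι → Bool
  | .leaf _ => false
  | .node _ _ => true

/-- The inner (non-leaf) nodes of a vtree. -/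
def innerFinset [DecidableEq ι] (V : Vtree ι) : Finset (Vtree ι) :=
  (V.subtreesList.filter fun t => t.isNodeB).toFinset

def depthV : Vtree ι → ℕ
  | .leaf _ => 0
  | .node l r => max (depthV l) (depthV r) + 1

/-- The nodes of a vtree occurring at a given depth. -/
def atDepth : Vtree ι → ℕ → Set (Vtree ι)
  | t, 0 => {t}
  | .leaf _, _+1 => ∅
  | .node l r, k+1 => atDepth l k ∪ atDepth r k

theorem numNodesV_lt_of_isChildOf {c p : Vtree ι} (h : c.IsChildOf p) :
    c.numNodesV < p.numNodesV := by
  cases p with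
  | leaf x => exact h.elim
  | node l r =>
    rcases h with h | h <;> subst h <;> simp only [numNodesV] <;> omega

end Vtree

/-- The tree `V_{v → Z_v}`, viewed as a graph: vertices are the subtrees of `V`
(inner subtrees play the role of the latent variables `Z_v`, leaves the role of the
variables `X`), with edges between each node and its children. -/
def vtreeGraph {ι : Type} (V : Vtree ι) : SimpleGraph (Vtree ι) where
  Adj s t := (s.IsChildOf t ∨ t.IsChildOf s) ∧ s.IsSubtreeOf V ∧ t.IsSubtreeOf V
  symm := by
    constructor
    rintro s t ⟨h, hs, ht⟩
    exact ⟨h.symm, ht, hs⟩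
  loopless := by
    constructor
    rintro s ⟨h, -, -⟩
    rcases h with h | h <;>
      exact absurd (Vtree.numNodesV_lt_of_isChildOf h) (lt_irrefl _)

namespace PC

variable {ι : Type} {Val : ι → Type}

/-- Structured decomposability with respect to a vtree: every product node has exactly
two children, whose scopes are the variables of the two children of an inner node of the
vtree. -/
def StructuredBy [DecidableEq ι] (C : PC ι Val) (V : Vtree ι) : Prop :=
  ∀ (i : Fin C.numNodes) (ch : List (Fin C.numNodes)), C.node i = .prod ch →
    ∃ (c₁ c₂ : Fin C.numNodes) (l r : Vtree ι), ch = [c₁, c₂] ∧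
      (Vtree.node l r).IsSubtreeOf V ∧
      scope C c₁ = l.varsFinset ∧ scope C c₂ = r.varsFinset

/-- Generalized structured decomposability (for products with arbitrarily many children):
every product node decomposes the variables of some vtree node into the variables of a
family of its subtrees. -/
def StructuredByGen [DecidableEq ι] (C : PC ι Val) (V : Vtree ι) : Prop :=
  ∀ (i : Fin C.numNodes) (ch : List (Fin C.numNodes)), C.node i = .prod ch →
    ∃ u : Vtree ι, u.IsSubtreeOf V ∧
      (∀ j ∈ ch, ∃ s : Vtree ι, s.IsSubtreeOf u ∧ scope C j = s.varsFinset) ∧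
      (ch.map fun j => scope C j).foldr (· ∪ ·) ∅ = u.varsFinset

/-- The hidden state size: the maximum number of product nodes sharing the scope of an
inner vtree node. -/
def hiddenStateSize [DecidableEq ι] (C : PC ι Val) (V : Vtree ι) : ℕ :=
  V.innerFinset.sup fun t => prodCount C t.varsFinset

end PC

/-! ### Contiguity and linear vtrees (for variables `Fin n`) -/

def IsIntervalFin {n : ℕ} (S : Finset (Fin n)) : Prop :=
  ∃ a b : ℕ, ∀ i : Fin n, i ∈ S ↔ (a ≤ (i : ℕ) ∧ (i : ℕ) ≤ b)

def PC.ContiguousPC {n : ℕ} {Val : Fin n → Type} (C : PC (Fin n) Val) : Prop :=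
  ∀ i : Fin C.numNodes, IsIntervalFin (PC.scope C i)

def Vtree.ContiguousV {n : ℕ} (V : Vtree (Fin n)) : Prop :=
  ∀ t : Vtree (Fin n), t.IsSubtreeOf V → IsIntervalFin t.varsFinset

inductive Vtree.IsLinearFrom {n : ℕ} : ℕ → Vtree (Fin n) → Prop
  | single (a : ℕ) (ha : a < n) (h : a + 1 = n) : IsLinearFrom a (.leaf ⟨a, ha⟩)
  | cons (a : ℕ) (ha : a < n) (T : Vtree (Fin n)) (h : a + 1 < n) :
      IsLinearFrom (a+1) T → IsLinearFrom a (.node (.leaf ⟨a, ha⟩) T)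

/-- The (right-)linear vtree, splitting `{Xᵢ}` from `{Xᵢ₊₁, …, Xₙ}` at each level. -/
def Vtree.IsLinear {n : ℕ} (V : Vtree (Fin n)) : Prop := Vtree.IsLinearFrom 0 V

/-! ### Blocking, covers and vtree labellings -/

/-- `C` blocks all paths between `A` and `B` in the graph `G`. -/
def SimpleGraph.BlocksSets {α : Type} (G : SimpleGraph α) (C A B : Set α) : Prop :=
  ∀ ⦃a b : α⦄, a ∈ A → b ∈ B → ∀ p : G.Walk a b, ∃ c ∈ C, c ∈ p.support

/-- A valid labelling of a target vtree `W` with respect to a (tree-shaped) graph `G`,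
where the variable `i` is represented by the vertex `xv i` and `X` is the set of all
variables.  The root is labelled `∅`, each leaf is labelled by the parent (i.e. the
neighbours) of its variable, the label of every inner node covers its variables, and the
labels of the children block their variables from the other labels. -/
structure IsValidLabelling {α ι : Type} [DecidableEq ι] (G : SimpleGraph α) (xv : ι → α)
    (X : Set ι) (W : Vtree ι) (label : Vtree ι → Set α) : Prop where
  root_empty : label W = ∅
  leaf_parent : ∀ x : ι, (Vtree.leaf x).IsSubtreeOf W →
    label (.leaf x) = {p | G.Adj (xv x) p}
  covers : ∀ l r : Vtree ι, (Vtree.node l r).IsSubtreeOf W →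
    G.BlocksSets (label (.node l r))
      (xv '' ((Vtree.node l r).varsFinset : Set ι))
      (xv '' (X \ ((Vtree.node l r).varsFinset : Set ι)))
  blocks_left : ∀ l r : Vtree ι, (Vtree.node l r).IsSubtreeOf W →
    G.BlocksSets (label l) (xv '' (l.varsFinset : Set ι)) (label r ∪ label (.node l r))
  blocks_right : ∀ l r : Vtree ι, (Vtree.node l r).IsSubtreeOf W →
    G.BlocksSets (label r) (xv '' (r.varsFinset : Set ι)) (label l ∪ label (.node l r))

/-! ### The augmented circuit -/

/-- Value types for the augmented circuit: the original variables keep their values, and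
each latent variable `Z_v` (indexed by the vtree node `v`) takes natural number values. -/
@[reducible] def augVal {ι : Type} (Val : ι → Type) : ι ⊕ Vtree ι → Type
  | .inl i => Val i
  | .inr _ => ℕ

/-- Find the subtree of a vtree with the given variable set (if any). -/
def Vtree.findByVars {ι : Type} [DecidableEq ι] : Vtree ι → Finset ι → Option (Vtree ι)
  | .leaf x, S => if S = {x} then some (.leaf x) else none
  | .node l r, S =>
      if S = (Vtree.node l r).varsFinset then some (.node l r)
      else (findByVars l S).orElse fun _ => findByVars r S

/-- The augmented circuit `A_aug` of a structured circuit: each product node `t` with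
scope `X_v` gets an additional leaf child over the latent variable `Z_v`, computing the
indicator function `1[Z_v = idx(t)]`.  (Node `2*i+1` is a copy of node `i` of the original
circuit and node `2*i` is the extra indicator leaf attached to it when `i` is a product.) -/
def PC.augment {ι : Type} {Val : ι → Type} [DecidableEq ι] (C : PC ι Val) (V : Vtree ι) :
    PC (ι ⊕ Vtree ι) (augVal Val) where
  numNodes := 2 * C.numNodes
  node := fun k =>
    if hk : (k : ℕ) % 2 = 1 then
      match C.node ⟨(k : ℕ) / 2, by have := k.isLt; omega⟩ with
      | .leaf v f => .leaf (Sum.inl v) f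
      | .sum ch => .sum (ch.map fun p =>
          ((⟨2 * (p.1 : ℕ) + 1, by have := p.1.isLt; omega⟩ : Fin (2 * C.numNodes)), p.2))
      | .prod ch => .prod ((ch.map fun (j : Fin C.numNodes) =>
          (⟨2 * (j : ℕ) + 1, by have := j.isLt; omega⟩ : Fin (2 * C.numNodes))) ++
          [⟨2 * ((k : ℕ) / 2), by have := k.isLt; omega⟩])
    else
      match C.node ⟨(k : ℕ) / 2, by have := k.isLt; omega⟩ with
      | .prod _ => .leaf
          (Sum.inr ((V.findByVars (PC.scope C ⟨(k : ℕ) / 2, by have := k.isLt; omega⟩)).getD V))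
          (fun m => if m = PC.idxOf C ⟨(k : ℕ) / 2, by have := k.isLt; omega⟩ then 1 else 0)
      | _ => .leaf (Sum.inr V) (fun _ => 1)

/-- Combine an assignment of the observed variables with an assignment of the latent
variables into an assignment for the augmented circuit. -/
def augAssign {ι : Type} {Val : ι → Type} [DecidableEq ι] (V : Vtree ι) (x : ∀ i, Val i)
    (z : ∀ t ∈ V.innerFinset, ℕ) : ∀ s : ι ⊕ Vtree ι, augVal Val s :=
  fun s => match s with
  | .inl i => x i
  | .inr t => if ht : t ∈ V.innerFinset then z t ht else 0

/-- The vtree of the augmented circuit: a new leaf for `Z_v` is attached at each inner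
node `v`. -/
def Vtree.augTree {ι : Type} : Vtree ι → Vtree (ι ⊕ Vtree ι)
  | .leaf x => .leaf (.inl x)
  | .node l r => .node (.leaf (.inr (.node l r))) (.node (augTree l) (augTree r))

namespace Aux
open PC
variable {ι : Type} {Val : ι → Type}

theorem evalFuel_stable {C : PC ι Val} (hwf : C.WF) (x : ∀ i, Val i) :
    ∀ (m : ℕ) (i : Fin C.numNodes), (i : ℕ) < m →
      ∀ k₁ k₂, (i : ℕ) < k₁ → (i : ℕ) < k₂ →
        PC.evalFuel C x k₁ i = PC.evalFuel C x k₂ i := by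
  intro m
  induction m with
  | zero => omega
  | succ m IH =>
    intro i him k₁ k₂ h1 h2
    obtain ⟨a, rfl⟩ : ∃ a, k₁ = a + 1 := ⟨k₁ - 1, by omega⟩
    obtain ⟨b, rfl⟩ : ∃ b, k₂ = b + 1 := ⟨k₂ - 1, by omega⟩
    have hch := hwf i
    cases hni : C.node i with
    | leaf v f => simp only [PC.evalFuel, hni]
    | sum ch =>
      simp only [PC.evalFuel, hni]
      congr 1
      refine List.map_congr_left fun p hp => ?_
      have hlt : (p.1 : ℕ) < i := hch p.1 (by simp [hni, PCNode.children]; exact ⟨p.2, hp⟩)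
      rw [IH p.1 (by omega) a b (by omega) (by omega)]
    | prod ch =>
      simp only [PC.evalFuel, hni]
      congr 1
      refine List.map_congr_left fun j hj => ?_
      have hlt : (j : ℕ) < i := hch j (by simp [hni, PCNode.children, hj])
      rw [IH j (by omega) a b (by omega) (by omega)]

theorem nodeEval_leaf {C : PC ι Val} (hwf : C.WF) (x : ∀ i, Val i) {i : Fin C.numNodes}
    {v : ι} {f : Val v → ℝ} (h : C.node i = .leaf v f) : C.nodeEval x i = f (x v) := by
  rw [PC.nodeEval, evalFuel_stable hwf x ((i:ℕ)+1) i (by omega) _ ((i:ℕ)+1) i.isLt (by omega)]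
  simp only [PC.evalFuel, h]

theorem nodeEval_sum {C : PC ι Val} (hwf : C.WF) (x : ∀ i, Val i) {i : Fin C.numNodes}
    {ch : List (Fin C.numNodes × ℝ)} (h : C.node i = .sum ch) :
    C.nodeEval x i = (ch.map fun p => p.2 * C.nodeEval x p.1).sum := by
  rw [PC.nodeEval, evalFuel_stable hwf x ((i:ℕ)+1) i (by omega) _ ((i:ℕ)+1) i.isLt (by omega)]
  simp only [PC.evalFuel, h]
  congr 1
  refine List.map_congr_left fun p hp => ?_
  have hlt : (p.1 : ℕ) < i := hwf i p.1 (by simp [h, PCNode.children]; exact ⟨p.2, hp⟩)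
  rw [PC.nodeEval, evalFuel_stable hwf x ((i:ℕ)+1) p.1 (by omega) _ C.numNodes (by omega) p.1.isLt]

theorem nodeEval_prod {C : PC ι Val} (hwf : C.WF) (x : ∀ i, Val i) {i : Fin C.numNodes}
    {ch : List (Fin C.numNodes)} (h : C.node i = .prod ch) :
    C.nodeEval x i = (ch.map fun j => C.nodeEval x j).prod := by
  rw [PC.nodeEval, evalFuel_stable hwf x ((i:ℕ)+1) i (by omega) _ ((i:ℕ)+1) i.isLt (by omega)]
  simp only [PC.evalFuel, h]
  congr 1
  refine List.map_congr_left fun j hj => ?_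
  have hlt : (j : ℕ) < i := hwf i j (by simp [h, PCNode.children, hj])
  rw [PC.nodeEval, evalFuel_stable hwf x ((i:ℕ)+1) j (by omega) _ C.numNodes (by omega) j.isLt]

theorem scopeFuel_stable [DecidableEq ι] {C : PC ι Val} (hwf : C.WF) :
    ∀ (m : ℕ) (i : Fin C.numNodes), (i : ℕ) < m →
      ∀ k₁ k₂, (i : ℕ) < k₁ → (i : ℕ) < k₂ →
        PC.scopeFuel C k₁ i = PC.scopeFuel C k₂ i := by
  intro m
  induction m with
  | zero => omega
  | succ m IH =>
    intro i him k₁ k₂ h1 h2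
    obtain ⟨a, rfl⟩ : ∃ a, k₁ = a + 1 := ⟨k₁ - 1, by omega⟩
    obtain ⟨b, rfl⟩ : ∃ b, k₂ = b + 1 := ⟨k₂ - 1, by omega⟩
    have hch := hwf i
    cases hni : C.node i with
    | leaf v f => simp only [PC.scopeFuel, hni]
    | sum ch =>
      simp only [PC.scopeFuel, hni]
      congr 1
      refine List.map_congr_left fun p hp => ?_
      have hlt : (p.1 : ℕ) < i := hch p.1 (by simp [hni, PCNode.children]; exact ⟨p.2, hp⟩)
      rw [IH p.1 (by omega) a b (by omega) (by omega)]
    | prod ch =>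
      simp only [PC.scopeFuel, hni]
      congr 1
      refine List.map_congr_left fun j hj => ?_
      have hlt : (j : ℕ) < i := hch j (by simp [hni, PCNode.children, hj])
      rw [IH j (by omega) a b (by omega) (by omega)]

theorem scope_leaf [DecidableEq ι] {C : PC ι Val} (hwf : C.WF) {i : Fin C.numNodes}
    {v : ι} {f : Val v → ℝ} (h : C.node i = .leaf v f) : C.scope i = {v} := by
  rw [PC.scope, scopeFuel_stable hwf ((i:ℕ)+1) i (by omega) _ ((i:ℕ)+1) i.isLt (by omega)]
  simp only [PC.scopeFuel, h]

theorem scope_sum [DecidableEq ι] {C : PC ι Val} (hwf : C.WF) {i : Fin C.numNodes}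
    {ch : List (Fin C.numNodes × ℝ)} (h : C.node i = .sum ch) :
    C.scope i = ((ch.map fun p => C.scope p.1).foldr (· ∪ ·) ∅) := by
  rw [PC.scope, scopeFuel_stable hwf ((i:ℕ)+1) i (by omega) _ ((i:ℕ)+1) i.isLt (by omega)]
  simp only [PC.scopeFuel, h]
  congr 1
  refine List.map_congr_left fun p hp => ?_
  have hlt : (p.1 : ℕ) < i := hwf i p.1 (by simp [h, PCNode.children]; exact ⟨p.2, hp⟩)
  rw [PC.scope, scopeFuel_stable hwf ((i:ℕ)+1) p.1 (by omega) _ C.numNodes (by omega) p.1.isLt]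

theorem scope_prod [DecidableEq ι] {C : PC ι Val} (hwf : C.WF) {i : Fin C.numNodes}
    {ch : List (Fin C.numNodes)} (h : C.node i = .prod ch) :
    C.scope i = ((ch.map fun j => C.scope j).foldr (· ∪ ·) ∅) := by
  rw [PC.scope, scopeFuel_stable hwf ((i:ℕ)+1) i (by omega) _ ((i:ℕ)+1) i.isLt (by omega)]
  simp only [PC.scopeFuel, h]
  congr 1
  refine List.map_congr_left fun j hj => ?_
  have hlt : (j : ℕ) < i := hwf i j (by simp [h, PCNode.children, hj])
  rw [PC.scope, scopeFuel_stable hwf ((i:ℕ)+1) j (by omega) _ C.numNodes (by omega) j.isLt]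

section VtreeLemmas
variable {κ : Type} [DecidableEq κ]

theorem mem_vars {T : Vtree κ} {y : κ} : y ∈ T.varsFinset ↔ y ∈ T.leavesList := by
  induction T with
  | leaf x => simp [Vtree.varsFinset, Vtree.leavesList]
  | node l r ihl ihr => simp [Vtree.varsFinset, Vtree.leavesList, ihl, ihr]

theorem vars_nonempty (T : Vtree κ) : T.varsFinset.Nonempty := by
  induction T with
  | leaf x => simp [Vtree.varsFinset]
  | node l r ihl ihr => exact ihl.mono (by simp [Vtree.varsFinset])

theorem leaves_infix {s T : Vtree κ} (h : s.IsSubtreeOf T) : s.leavesList <:+: T.leavesList := by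
  induction h with
  | refl => exact List.infix_refl _
  | left h ih => exact ih.trans (List.prefix_append _ _).isInfix
  | right h ih => exact ih.trans (List.suffix_append _ _).isInfix

theorem nodup_leaves {T : Vtree κ} (hn : T.leavesList.Nodup) {s : Vtree κ}
    (h : s.IsSubtreeOf T) : s.leavesList.Nodup := (leaves_infix h).sublist.nodup hn

theorem vars_disjoint {l r : Vtree κ} (hn : (Vtree.node l r).leavesList.Nodup) :
    Disjoint l.varsFinset r.varsFinset := by
  rw [Vtree.leavesList, List.nodup_append] at hn
  rw [Finset.disjoint_left]
  intro a hal har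
  exact hn.2.2 a (mem_vars.1 hal) a (mem_vars.1 har) rfl

theorem subtree_trans {a b c : Vtree κ} (hab : a.IsSubtreeOf b) (hbc : b.IsSubtreeOf c) :
    a.IsSubtreeOf c := by
  induction hbc with
  | refl => exact hab
  | left h ih => exact .left ih
  | right h ih => exact .right ih

theorem numNodesV_le {s T : Vtree κ} (h : s.IsSubtreeOf T) : s.numNodesV ≤ T.numNodesV := by
  induction h with
  | refl => exact le_refl _
  | left _ ih => simp only [Vtree.numNodesV]; omega
  | right _ ih => simp only [Vtree.numNodesV]; omega

theorem vars_subset {s T : Vtree κ} (h : s.IsSubtreeOf T) : s.varsFinset ⊆ T.varsFinset := by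
  induction h with
  | refl => exact Finset.Subset.refl _
  | left _ ih => exact ih.trans (by simp [Vtree.varsFinset])
  | right _ ih => exact ih.trans (by simp [Vtree.varsFinset])

theorem subtree_leaf_inv {s : Vtree κ} {y : κ} (h : s.IsSubtreeOf (.leaf y)) : s = .leaf y := by
  cases h; rfl

theorem subtree_node_inv {s l r : Vtree κ} (h : s.IsSubtreeOf (.node l r)) :
    s = .node l r ∨ s.IsSubtreeOf l ∨ s.IsSubtreeOf r := by
  cases h with
  | refl => exact Or.inl rfl
  | left h => exact Or.inr (Or.inl h)
  | right h => exact Or.inr (Or.inr h)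

theorem vars_ne_lr {l r u u' : Vtree κ} (hn : (Vtree.node l r).leavesList.Nodup)
    (hu : u.IsSubtreeOf l) (hu' : u'.IsSubtreeOf r) : u.varsFinset ≠ u'.varsFinset := by
  intro he
  obtain ⟨y, hy⟩ := vars_nonempty u
  exact (vars_disjoint hn).forall_ne_finset (vars_subset hu hy)
    (vars_subset hu' (he ▸ hy)) rfl

theorem ne_lr {l r u u' : Vtree κ} (hn : (Vtree.node l r).leavesList.Nodup)
    (hu : u.IsSubtreeOf l) (hu' : u'.IsSubtreeOf r) : u ≠ u' := by
  intro he; exact vars_ne_lr hn hu hu' (he ▸ rfl)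

theorem vars_ne_node_left {l r u' : Vtree κ} (hn : (Vtree.node l r).leavesList.Nodup)
    (hu' : u'.IsSubtreeOf l) : (Vtree.node l r).varsFinset ≠ u'.varsFinset := by
  intro he
  obtain ⟨y, hy⟩ := vars_nonempty r
  have hy2 : y ∈ (Vtree.node l r).varsFinset := by
    simp [Vtree.varsFinset]; exact Or.inr hy
  exact (vars_disjoint hn).forall_ne_finset (vars_subset hu' (he ▸ hy2)) hy rfl

theorem vars_ne_node_right {l r u' : Vtree κ} (hn : (Vtree.node l r).leavesList.Nodup)
    (hu' : u'.IsSubtreeOf r) : (Vtree.node l r).varsFinset ≠ u'.varsFinset := by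
  intro he
  obtain ⟨y, hy⟩ := vars_nonempty l
  have hy2 : y ∈ (Vtree.node l r).varsFinset := by
    simp [Vtree.varsFinset]; exact Or.inl hy
  exact (vars_disjoint hn).forall_ne_finset hy (vars_subset hu' (he ▸ hy2)) rfl

theorem nodup_left {l r : Vtree κ} (hn : (Vtree.node l r).leavesList.Nodup) :
    l.leavesList.Nodup := (List.nodup_append.1 hn).1

theorem nodup_right {l r : Vtree κ} (hn : (Vtree.node l r).leavesList.Nodup) :
    r.leavesList.Nodup := (List.nodup_append.1 hn).2.1

theorem unique_subtree {T : Vtree κ} (hn : T.leavesList.Nodup) :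
    ∀ {u u' : Vtree κ}, u.IsSubtreeOf T → u'.IsSubtreeOf T →
      u.varsFinset = u'.varsFinset → u = u' := by
  induction T with
  | leaf y =>
    intro u u' hu hu' _
    rw [subtree_leaf_inv hu, subtree_leaf_inv hu']
  | node l r ihl ihr =>
    intro u u' hu hu' he
    rcases subtree_node_inv hu with rfl | h | h <;>
      rcases subtree_node_inv hu' with rfl | h' | h'
    · rfl
    · exact absurd he (vars_ne_node_left hn h')
    · exact absurd he (vars_ne_node_right hn h')
    · exact absurd he.symm (vars_ne_node_left hn h)
    · exact ihl (nodup_left hn) h h' he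
    · exact absurd he (vars_ne_lr hn h h')
    · exact absurd he.symm (vars_ne_node_right hn h)
    · exact absurd he.symm (vars_ne_lr hn h' h)
    · exact ihr (nodup_right hn) h h' he

theorem find_sound : ∀ {T : Vtree κ} {S : Finset κ} {w : Vtree κ},
    T.findByVars S = some w → w.IsSubtreeOf T ∧ w.varsFinset = S := by
  intro T
  induction T with
  | leaf y =>
    intro S w h
    rw [Vtree.findByVars] at h
    split_ifs at h with h1
    cases h
    exact ⟨.refl _, by simp [Vtree.varsFinset, h1]⟩
  | node l r ihl ihr =>
    intro S w h
    rw [Vtree.findByVars] at h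
    split_ifs at h with h1
    · cases h; exact ⟨.refl _, h1.symm⟩
    · cases hl : Vtree.findByVars l S with
      | none =>
        rw [hl] at h; simp only [Option.orElse] at h
        obtain ⟨h2, h3⟩ := ihr h
        exact ⟨.right h2, h3⟩
      | some v =>
        rw [hl] at h; simp only [Option.orElse] at h
        cases h
        obtain ⟨h2, h3⟩ := ihl hl
        exact ⟨.left h2, h3⟩

theorem find_eq_some {T : Vtree κ} (hn : T.leavesList.Nodup) :
    ∀ {u : Vtree κ}, u.IsSubtreeOf T → T.findByVars u.varsFinset = some u := by
  induction T with
  | leaf y =>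
    intro u hu
    rw [subtree_leaf_inv hu]
    simp [Vtree.findByVars, Vtree.varsFinset]
  | node l r ihl ihr =>
    intro u hu
    rw [Vtree.findByVars]
    rcases subtree_node_inv hu with rfl | h | h
    · rw [if_pos rfl]
    · rw [if_neg fun he => (vars_ne_node_left hn h) he.symm, ihl (nodup_left hn) h]
      rfl
    · rw [if_neg fun he => (vars_ne_node_right hn h) he.symm]
      have hnone : l.findByVars u.varsFinset = none := by
        cases hl : l.findByVars u.varsFinset with
        | none => rfl
        | some w =>
          obtain ⟨hw, hvw⟩ := find_sound hl
          exact absurd hvw (vars_ne_lr hn hw h)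
      rw [hnone, ihr (nodup_right hn) h]
      rfl

theorem mem_subtreesList {T s : Vtree κ} : s ∈ T.subtreesList ↔ s.IsSubtreeOf T := by
  induction T with
  | leaf y =>
    simp only [Vtree.subtreesList, List.mem_singleton]
    exact ⟨fun h => h ▸ .refl _, fun h => subtree_leaf_inv h⟩
  | node l r ihl ihr =>
    simp only [Vtree.subtreesList, List.mem_cons, List.mem_append, ihl, ihr]
    constructor
    · rintro (rfl | h | h)
      · exact .refl _
      · exact .left h
      · exact .right h
    · intro h
      rcases subtree_node_inv h with rfl | h | h
      · exact Or.inl rfl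
      · exact Or.inr (Or.inl h)
      · exact Or.inr (Or.inr h)

theorem nodup_subtreesList {T : Vtree κ} (hn : T.leavesList.Nodup) :
    T.subtreesList.Nodup := by
  induction T with
  | leaf y => simp [Vtree.subtreesList]
  | node l r ihl ihr =>
    rw [Vtree.subtreesList]
    refine List.Nodup.cons ?_ ?_
    · intro hmem
      rcases List.mem_append.1 hmem with h | h
      · have := numNodesV_le (mem_subtreesList.1 h)
        simp only [Vtree.numNodesV] at this; omega
      · have := numNodesV_le (mem_subtreesList.1 h)
        simp only [Vtree.numNodesV] at this; omega
    · refine List.Nodup.append (ihl (nodup_left hn)) (ihr (nodup_right hn)) ?_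
      intro s hsl hsr
      exact ne_lr hn (mem_subtreesList.1 hsl) (mem_subtreesList.1 hsr) rfl

def innerList (T : Vtree κ) : List (Vtree κ) := T.subtreesList.filter (fun t => t.isNodeB)

theorem innerFinset_eq (T : Vtree κ) : T.innerFinset = (innerList T).toFinset := rfl

theorem mem_innerList {T s : Vtree κ} :
    s ∈ innerList T ↔ s.IsSubtreeOf T ∧ s.isNodeB = true := by
  simp [innerList, List.mem_filter, mem_subtreesList]

theorem innerList_leaf (y : κ) : innerList (.leaf y : Vtree κ) = [] := rfl

theorem innerList_node (l r : Vtree κ) :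
    innerList (.node l r) = .node l r :: (innerList l ++ innerList r) := by
  simp [innerList, Vtree.subtreesList, List.filter_append, Vtree.isNodeB]

theorem innerList_nodup {T : Vtree κ} (hn : T.leavesList.Nodup) : (innerList T).Nodup :=
  (nodup_subtreesList hn).filter _

theorem eq_leaf_of_vars_singleton {u : Vtree κ} (hn : u.leavesList.Nodup) {v : κ}
    (h : u.varsFinset = {v}) : u = .leaf v := by
  cases u with
  | leaf y =>
    have : y ∈ ({v} : Finset κ) := h ▸ (by simp [Vtree.varsFinset])
    simp at this; rw [this]
  | node l r =>
    exfalso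
    obtain ⟨a, ha⟩ := vars_nonempty l
    obtain ⟨b, hb⟩ := vars_nonempty r
    have ha' : a ∈ (Vtree.node l r).varsFinset := by simp [Vtree.varsFinset]; exact Or.inl ha
    have hb' : b ∈ (Vtree.node l r).varsFinset := by simp [Vtree.varsFinset]; exact Or.inr hb
    rw [h] at ha' hb'
    simp at ha' hb'
    exact (vars_disjoint hn).forall_ne_finset ha (ha' ▸ hb' ▸ hb) rfl

end VtreeLemmas

variable [DecidableEq ι]

def dbl {C : PC ι Val} {V : Vtree ι} (i : Fin C.numNodes) : Fin (C.augment V).numNodes :=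
  ⟨2 * (i : ℕ) + 1, by have := i.isLt; show 2 * (i:ℕ) + 1 < 2 * C.numNodes; omega⟩

def dblE {C : PC ι Val} {V : Vtree ι} (i : Fin C.numNodes) : Fin (C.augment V).numNodes :=
  ⟨2 * (i : ℕ), by have := i.isLt; show 2 * (i:ℕ) < 2 * C.numNodes; omega⟩

theorem aug_node_dbl {C : PC ι Val} (V : Vtree ι) (i : Fin C.numNodes) :
    (C.augment V).node (dbl i) =
      match C.node i with
      | .leaf v f => .leaf (Sum.inl v) f
      | .sum ch => .sum (ch.map fun p => (dbl p.1, p.2))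
      | .prod ch => .prod ((ch.map fun j => dbl j) ++ [dblE i]) := by
  simp only [PC.augment, dbl, dblE]
  rw [dif_pos (by omega : (2 * (i:ℕ) + 1) % 2 = 1)]
  simp only [show (2 * (i:ℕ) + 1) / 2 = (i:ℕ) from by omega, Fin.eta]
  rfl

theorem aug_node_dblE {C : PC ι Val} (V : Vtree ι) (i : Fin C.numNodes)
    {ch : List (Fin C.numNodes)} (h : C.node i = .prod ch) :
    (C.augment V).node (dblE i) =
      .leaf (Sum.inr ((V.findByVars (PC.scope C i)).getD V))
        (fun m => if m = PC.idxOf C i then 1 else 0) := by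
  simp only [PC.augment, dblE]
  rw [dif_neg (by omega : ¬ (2 * (i:ℕ)) % 2 = 1)]
  have hi : (⟨2 * (i:ℕ) / 2, by have := i.isLt; omega⟩ : Fin C.numNodes) = i :=
    Fin.ext (by simp)
  rw [hi, h]

theorem aug_node_dblE_isLeaf {C : PC ι Val} (V : Vtree ι) (i : Fin C.numNodes) :
    ∃ v f, (C.augment V).node (dblE i) = .leaf v f := by
  simp only [PC.augment, dblE]
  rw [dif_neg (by omega : ¬ (2 * (i:ℕ)) % 2 = 1)]
  have hi : (⟨2 * (i:ℕ) / 2, by have := i.isLt; omega⟩ : Fin C.numNodes) = i :=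
    Fin.ext (by simp)
  rw [hi]
  cases C.node i <;> exact ⟨_, _, rfl⟩

theorem aug_wf {C : PC ι Val} (hwf : C.WF) (V : Vtree ι) : (C.augment V).WF := by
  intro k j hj
  have hk2 : (k:ℕ) < 2 * C.numNodes := k.isLt
  set i : Fin C.numNodes := ⟨(k:ℕ)/2, by omega⟩ with hi
  by_cases hk : (k:ℕ) % 2 = 1
  · have hkd : k = dbl (V := V) i := Fin.ext (by simp [dbl, hi]; omega)
    rw [hkd, aug_node_dbl] at hj
    cases hni : C.node i with
    | leaf v f => rw [hni] at hj; simp [PCNode.children] at hj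
    | sum ch =>
      rw [hni] at hj
      simp only [PCNode.children, List.map_map, List.mem_map] at hj
      obtain ⟨p, hp, rfl⟩ := hj
      have := hwf i p.1 (by rw [hni]; simp [PCNode.children]; exact ⟨p.2, hp⟩)
      have h2 : (p.1 : ℕ) < (k:ℕ)/2 := this
      show 2 * (p.1:ℕ) + 1 < (k:ℕ)
      omega
    | prod ch =>
      rw [hni] at hj
      simp only [PCNode.children, List.mem_append, List.mem_map, List.mem_singleton] at hj
      rcases hj with ⟨jc, hjc, rfl⟩ | rfl
      · have := hwf i jc (by rw [hni]; simp [PCNode.children, hjc])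
        have h2 : (jc : ℕ) < (k:ℕ)/2 := this
        show 2 * (jc:ℕ) + 1 < (k:ℕ)
        omega
      · show 2 * ((k:ℕ)/2) < (k:ℕ)
        omega
  · have hkd : k = dblE (V := V) i := Fin.ext (by simp [dblE, hi]; omega)
    obtain ⟨v, f, hleaf⟩ := aug_node_dblE_isLeaf (C := C) V i
    rw [hkd, hleaf] at hj
    simp [PCNode.children] at hj

section SumZ
variable {κ : Type} [DecidableEq κ]

def sumZ (R : κ → Finset ℕ) : List κ → (κ → ℕ) → ((κ → ℕ) → ℝ) → ℝ
  | [], w, F => F w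
  | t :: L, w, F => ∑ b ∈ R t, sumZ R L (Function.update w t b) F

theorem sumZ_congr {R : κ → Finset ℕ} {L : List κ} {w : κ → ℕ} {F G : (κ → ℕ) → ℝ}
    (h : ∀ g : κ → ℕ, (∀ t, t ∉ L → g t = w t) → F g = G g) :
    sumZ R L w F = sumZ R L w G := by
  induction L generalizing w with
  | nil => exact h w (fun _ _ => rfl)
  | cons a L IH =>
    simp only [sumZ]
    refine Finset.sum_congr rfl fun b _ => ?_
    refine IH fun g hg => h g fun t ht => ?_
    rw [List.mem_cons, not_or] at ht
    rw [hg t ht.2, Function.update_of_ne ht.1]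

theorem sumZ_mul_left {R : κ → Finset ℕ} {L : List κ} {w : κ → ℕ} {F : (κ → ℕ) → ℝ}
    (c : ℝ) : sumZ R L w (fun f => c * F f) = c * sumZ R L w F := by
  induction L generalizing w with
  | nil => rfl
  | cons a L IH => simp only [sumZ, IH, Finset.mul_sum]

theorem sumZ_zero {R : κ → Finset ℕ} {L : List κ} {w : κ → ℕ} :
    sumZ R L w (fun _ => (0:ℝ)) = 0 := by
  have := sumZ_mul_left (R := R) (L := L) (w := w) (F := fun _ => (0:ℝ)) 0
  simpa using this

theorem sumZ_add {R : κ → Finset ℕ} {L : List κ} {w : κ → ℕ} {F G : (κ → ℕ) → ℝ} :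
    sumZ R L w (fun f => F f + G f) = sumZ R L w F + sumZ R L w G := by
  induction L generalizing w with
  | nil => rfl
  | cons a L IH => simp only [sumZ, IH, Finset.sum_add_distrib]

theorem sumZ_listSum {α : Type*} {R : κ → Finset ℕ} {L : List κ} {w : κ → ℕ}
    (ch : List α) (G : α → (κ → ℕ) → ℝ) :
    sumZ R L w (fun f => (ch.map fun p => G p f).sum) =
      (ch.map fun p => sumZ R L w (G p)).sum := by
  induction ch with
  | nil => simpa using sumZ_zero
  | cons p ch IH =>
    simp only [List.map_cons, List.sum_cons]
    rw [← IH, ← sumZ_add]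

theorem sumZ_append {R : κ → Finset ℕ} {L₁ L₂ : List κ} {w : κ → ℕ} {F : (κ → ℕ) → ℝ} :
    sumZ R (L₁ ++ L₂) w F = sumZ R L₁ w (fun w' => sumZ R L₂ w' F) := by
  induction L₁ generalizing w with
  | nil => rfl
  | cons a L IH =>
    simp only [sumZ]
    exact Finset.sum_congr rfl fun b _ => IH

theorem sum_pi_insert {α : Type} [DecidableEq α] {t : α → Finset ℕ} {s : Finset α} {a : α}
    (ha : a ∉ s) (F : (∀ x ∈ insert a s, ℕ) → ℝ) :
    ∑ z ∈ (insert a s).pi t, F z =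
      ∑ b ∈ t a, ∑ z ∈ s.pi t, F (Finset.Pi.cons s a b z) := by
  have h₁ : (↑(t a) : Set ℕ).PairwiseDisjoint
      (fun b => (s.pi t).image (Finset.Pi.cons s a b)) := by
    intro u _ v _ huv
    simp only [Function.onFun, Finset.disjoint_left, Finset.mem_image]
    rintro _ ⟨p₂, _, eq₂⟩ ⟨p₃, _, eq₃⟩
    have : Finset.Pi.cons s a u p₂ a (Finset.mem_insert_self _ _)
        = Finset.Pi.cons s a v p₃ a (Finset.mem_insert_self _ _) := by rw [eq₂, eq₃]
    rw [Finset.Pi.cons_same, Finset.Pi.cons_same] at this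
    exact huv this
  rw [Finset.pi_insert ha, Finset.sum_biUnion h₁]
  refine Finset.sum_congr rfl fun b _ => ?_
  rw [Finset.sum_image fun p₁ _ p₂ _ eq => Finset.Pi.cons_injective ha eq]

theorem pi_to_sumZ (R : κ → Finset ℕ) :
    ∀ (L : List κ), L.Nodup → ∀ (w : κ → ℕ) (F : (κ → ℕ) → ℝ),
    (∑ z ∈ L.toFinset.pi (fun t => R t),
        F (fun t => if h : t ∈ L.toFinset then z t h else w t)) = sumZ R L w F := by
  intro L
  induction L with
  | nil =>
    intro _ w F
    rw [List.toFinset_nil, Finset.pi_empty, Finset.sum_singleton]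
    exact congrArg F (funext fun t => by simp)
  | cons a L IH =>
    intro hnd w F
    have hnd' := List.nodup_cons.1 hnd
    have ha : a ∉ L.toFinset := by simpa using hnd'.1
    rw [List.toFinset_cons, sum_pi_insert ha]
    show _ = ∑ b ∈ R a, sumZ R L (Function.update w a b) F
    refine Finset.sum_congr rfl fun b _ => ?_
    rw [← IH hnd'.2 (Function.update w a b) F]
    refine Finset.sum_congr rfl fun z hz => ?_
    congr 1
    funext t
    by_cases h1 : t = a
    · subst h1
      rw [dif_pos (Finset.mem_insert_self _ _), Finset.Pi.cons_same]
      rw [dif_neg (by simpa using hnd'.1), Function.update_self]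
    · by_cases h2 : t ∈ L.toFinset
      · rw [dif_pos (Finset.mem_insert_of_mem h2), Finset.Pi.cons_ne (fun he => h1 he.symm), dif_pos h2]
      · rw [dif_neg (by simp [h1, h2]), dif_neg h2, Function.update_of_ne h1]

end SumZ

section Misc
variable {ι : Type} {Val : ι → Type} [DecidableEq ι]

theorem idx_lt {C : PC ι Val} {i : Fin C.numNodes}
    (h : (C.node i).isProdB = true) : PC.idxOf C i < PC.prodCount C (PC.scope C i) := by
  apply Finset.card_lt_card
  rw [Finset.ssubset_iff_of_subset (fun j hj => ?sub)]
  case sub =>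
    simp only [Finset.mem_filter, Finset.mem_univ, true_and] at hj ⊢
    exact hj.2
  refine ⟨i, ?_, ?_⟩
  · simp [h]
  · simp

def asgF (x : ∀ i, Val i) (f : Vtree ι → ℕ) : ∀ s : ι ⊕ Vtree ι, augVal Val s
  | .inl i => x i
  | .inr t => f t

theorem augAssign_eq (V : Vtree ι) (x : ∀ i, Val i) (z : ∀ t ∈ V.innerFinset, ℕ) :
    augAssign V x z = asgF x (fun t => if h : t ∈ V.innerFinset then z t h else 0) := by
  funext s; cases s <;> rfl

theorem foldr_union_const {l : List (Finset ι)} {s : Finset ι}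
    (h : ∀ a ∈ l, a = s) (hl : l ≠ []) : l.foldr (· ∪ ·) ∅ = s := by
  induction l with
  | nil => exact absurd rfl hl
  | cons a l IH =>
    have ha := h a List.mem_cons_self
    cases l with
    | nil => simp [List.foldr, ha]
    | cons b l =>
      rw [List.foldr_cons, IH (fun c hc => h c (List.mem_cons_of_mem _ hc)) (by simp), ha]
      exact Finset.union_self s

theorem scope_sum_child {C : PC ι Val} (hwf : C.WF) (hsm : C.Smooth)
    (hns : C.NormalizedSums) {i : Fin C.numNodes} {ch : List (Fin C.numNodes × ℝ)}
    (h : C.node i = .sum ch) {p : Fin C.numNodes × ℝ} (hp : p ∈ ch) :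
    PC.scope C p.1 = PC.scope C i := by
  rw [scope_sum hwf h]
  symm
  refine foldr_union_const ?_ ?_
  · intro a ha
    simp only [List.mem_map] at ha
    obtain ⟨q, hq, rfl⟩ := ha
    exact hsm i ch h q hq p hp
  · intro hnil
    have := hns i ch h
    have hch : ch = [] := List.map_eq_nil_iff.1 hnil
    rw [hch] at this
    simp at this

end Misc

section Main
variable {ι : Type} {Val : ι → Type} [DecidableEq ι]

theorem aug_dep {C : PC ι Val} {V : Vtree ι}
    (hwf : C.WF) (hsm : C.Smooth) (hstr : C.StructuredBy V) (hns : C.NormalizedSums)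
    (hVn : V.leavesList.Nodup) (x : ∀ i, Val i) :
    ∀ (m : ℕ) (i : Fin C.numNodes), (i:ℕ) < m →
      ∀ u : Vtree ι, u.IsSubtreeOf V → PC.scope C i = u.varsFinset →
      ∀ f g : Vtree ι → ℕ, (∀ t, t.IsSubtreeOf u → f t = g t) →
      (C.augment V).nodeEval (asgF x f) (dbl i) =
        (C.augment V).nodeEval (asgF x g) (dbl i) := by
  intro m
  induction m with
  | zero => omega
  | succ m IH =>
    intro i him u hu hsc f g hfg
    have hawf := aug_wf hwf V
    cases hni : C.node i with
    | leaf v fl =>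
      have h1 : (C.augment V).node (dbl i) = .leaf (Sum.inl v) fl := by
        rw [aug_node_dbl, hni]
      rw [nodeEval_leaf hawf _ h1, nodeEval_leaf hawf _ h1]
      rw [show asgF x f (Sum.inl v) = asgF x g (Sum.inl v) from rfl]
    | sum ch =>
      have h1 : (C.augment V).node (dbl i) = .sum (ch.map fun p => (dbl p.1, p.2)) := by
        rw [aug_node_dbl, hni]
      rw [nodeEval_sum hawf _ h1, nodeEval_sum hawf _ h1, List.map_map, List.map_map]
      congr 1
      refine List.map_congr_left fun p hp => ?_
      simp only [Function.comp_apply]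
      congr 1
      have hchild : (p.1:ℕ) < (i:ℕ) :=
        hwf i p.1 (by rw [hni]; simp [PCNode.children]; exact ⟨p.2, hp⟩)
      exact IH p.1 (by omega) u hu
        (by rw [scope_sum_child hwf hsm hns hni hp, hsc]) f g hfg
    | prod ch =>
      obtain ⟨c₁, c₂, l, r, hch, hsub, hs1, hs2⟩ := hstr i ch hni
      subst hch
      have hscope : PC.scope C i = (Vtree.node l r).varsFinset := by
        rw [scope_prod hwf hni]
        simp [Vtree.varsFinset, hs1, hs2]
      have hu2 : u = Vtree.node l r := unique_subtree hVn hu hsub (by rw [← hsc, hscope])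
      subst hu2
      have hc1 : (c₁:ℕ) < (i:ℕ) := hwf i c₁ (by rw [hni]; simp [PCNode.children])
      have hc2 : (c₂:ℕ) < (i:ℕ) := hwf i c₂ (by rw [hni]; simp [PCNode.children])
      have hlV : l.IsSubtreeOf V := subtree_trans (.left (.refl l)) hu
      have hrV : r.IsSubtreeOf V := subtree_trans (.right (.refl r)) hu
      have h1 : (C.augment V).node (dbl i) = .prod [dbl c₁, dbl c₂, dblE i] := by
        rw [aug_node_dbl, hni]; rfl
      have hfind : (V.findByVars (PC.scope C i)).getD V = Vtree.node l r := by
        rw [hscope, find_eq_some hVn hu]; rfl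
      have h2 := aug_node_dblE V i hni
      rw [hfind] at h2
      have e1 := IH c₁ (by omega) l hlV hs1 f g (fun t ht => hfg t (.left ht))
      have e2 := IH c₂ (by omega) r hrV hs2 f g (fun t ht => hfg t (.right ht))
      have e3f : (C.augment V).nodeEval (asgF x f) (dblE i)
          = if f (Vtree.node l r) = PC.idxOf C i then (1:ℝ) else 0 :=
        nodeEval_leaf hawf _ h2
      have e3g : (C.augment V).nodeEval (asgF x g) (dblE i)
          = if g (Vtree.node l r) = PC.idxOf C i then (1:ℝ) else 0 :=
        nodeEval_leaf hawf _ h2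
      have e4 : f (Vtree.node l r) = g (Vtree.node l r) := hfg _ (.refl _)
      rw [nodeEval_prod hawf _ h1, nodeEval_prod hawf _ h1]
      simp only [List.map_cons, List.map_nil, List.prod_cons, List.prod_nil]
      rw [e1, e2, e3f, e3g, e4]

theorem key_lemma {C : PC ι Val} {V : Vtree ι}
    (hwf : C.WF) (hsm : C.Smooth) (hstr : C.StructuredBy V) (hns : C.NormalizedSums)
    (hVn : V.leavesList.Nodup) (x : ∀ i, Val i) :
    ∀ (m : ℕ) (i : Fin C.numNodes), (i:ℕ) < m →
      ∀ u : Vtree ι, u.IsSubtreeOf V → PC.scope C i = u.varsFinset →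
      ∀ w : Vtree ι → ℕ,
      sumZ (fun t => Finset.range (C.prodCount t.varsFinset)) (innerList u) w
        (fun f => (C.augment V).nodeEval (asgF x f) (dbl i)) = C.nodeEval x i := by
  intro m
  induction m with
  | zero => omega
  | succ m IH =>
    intro i him u hu hsc w
    have hawf := aug_wf hwf V
    cases hni : C.node i with
    | leaf v fl =>
      have hul : u = .leaf v :=
        eq_leaf_of_vars_singleton (nodup_leaves hVn hu) (by rw [← hsc, scope_leaf hwf hni])
      subst hul
      rw [innerList_leaf]
      show (C.augment V).nodeEval (asgF x w) (dbl i) = C.nodeEval x i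
      have h1 : (C.augment V).node (dbl i) = .leaf (Sum.inl v) fl := by
        rw [aug_node_dbl, hni]
      rw [nodeEval_leaf hawf _ h1, nodeEval_leaf hwf _ hni]
      rfl
    | sum ch =>
      have h1 : (C.augment V).node (dbl i) = .sum (ch.map fun p => (dbl p.1, p.2)) := by
        rw [aug_node_dbl, hni]
      have hF : ∀ f : Vtree ι → ℕ, (C.augment V).nodeEval (asgF x f) (dbl i)
          = (ch.map fun p => p.2 * (C.augment V).nodeEval (asgF x f) (dbl p.1)).sum := by
        intro f
        rw [nodeEval_sum hawf _ h1, List.map_map]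
        rfl
      rw [sumZ_congr (G := fun f =>
        (ch.map fun p => p.2 * (C.augment V).nodeEval (asgF x f) (dbl p.1)).sum)
        (fun g _ => hF g)]
      rw [sumZ_listSum ch (fun p f => p.2 * (C.augment V).nodeEval (asgF x f) (dbl p.1))]
      rw [nodeEval_sum hwf x hni]
      congr 1
      refine List.map_congr_left fun p hp => ?_
      rw [sumZ_mul_left]
      congr 1
      have hchild : (p.1:ℕ) < (i:ℕ) :=
        hwf i p.1 (by rw [hni]; simp [PCNode.children]; exact ⟨p.2, hp⟩)
      exact IH p.1 (by omega) u hu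
        (by rw [scope_sum_child hwf hsm hns hni hp, hsc]) w
    | prod ch =>
      obtain ⟨c₁, c₂, l, r, hch, hsub, hs1, hs2⟩ := hstr i ch hni
      subst hch
      have hscope : PC.scope C i = (Vtree.node l r).varsFinset := by
        rw [scope_prod hwf hni]
        simp [Vtree.varsFinset, hs1, hs2]
      have hu2 : u = Vtree.node l r := unique_subtree hVn hu hsub (by rw [← hsc, hscope])
      subst hu2
      have hnodup_u : (Vtree.node l r).leavesList.Nodup := nodup_leaves hVn hu
      have hc1 : (c₁:ℕ) < (i:ℕ) := hwf i c₁ (by rw [hni]; simp [PCNode.children])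
      have hc2 : (c₂:ℕ) < (i:ℕ) := hwf i c₂ (by rw [hni]; simp [PCNode.children])
      have hlV : l.IsSubtreeOf V := subtree_trans (.left (.refl l)) hu
      have hrV : r.IsSubtreeOf V := subtree_trans (.right (.refl r)) hu
      have h1 : (C.augment V).node (dbl i) = .prod [dbl c₁, dbl c₂, dblE i] := by
        rw [aug_node_dbl, hni]; rfl
      have hfind : (V.findByVars (PC.scope C i)).getD V = Vtree.node l r := by
        rw [hscope, find_eq_some hVn hu]; rfl
      have h2 := aug_node_dblE V i hni
      rw [hfind] at h2
      have hE : ∀ f : Vtree ι → ℕ, (C.augment V).nodeEval (asgF x f) (dbl i)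
          = (C.augment V).nodeEval (asgF x f) (dbl c₁) *
            ((C.augment V).nodeEval (asgF x f) (dbl c₂) *
              ((if f (Vtree.node l r) = PC.idxOf C i then (1:ℝ) else 0) * 1)) := by
        intro f
        rw [nodeEval_prod hawf _ h1]
        simp only [List.map_cons, List.map_nil, List.prod_cons, List.prod_nil]
        have e3 : (C.augment V).nodeEval (asgF x f) (dblE i)
            = if f (Vtree.node l r) = PC.idxOf C i then (1:ℝ) else 0 :=
          nodeEval_leaf hawf _ h2
        rw [e3]
      have hu_not_l : Vtree.node l r ∉ innerList l := fun hmem => by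
        have := numNodesV_le (mem_innerList.1 hmem).1
        simp only [Vtree.numNodesV] at this; omega
      have hu_not_r : Vtree.node l r ∉ innerList r := fun hmem => by
        have := numNodesV_le (mem_innerList.1 hmem).1
        simp only [Vtree.numNodesV] at this; omega
      rw [innerList_node]
      simp only [sumZ, sumZ_append]
      have hstep : ∀ b : ℕ,
          sumZ (fun t => Finset.range (C.prodCount t.varsFinset)) (innerList l)
            (Function.update w (Vtree.node l r) b)
            (fun w' => sumZ (fun t => Finset.range (C.prodCount t.varsFinset)) (innerList r) w'
              (fun f => (C.augment V).nodeEval (asgF x f) (dbl i)))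
          = (if b = PC.idxOf C i then (1:ℝ) else 0) * (C.nodeEval x c₁ * C.nodeEval x c₂) := by
        intro b
        have inner : ∀ w' : Vtree ι → ℕ,
            (∀ t, t ∉ innerList l → w' t = Function.update w (Vtree.node l r) b t) →
            sumZ (fun t => Finset.range (C.prodCount t.varsFinset)) (innerList r) w'
              (fun f => (C.augment V).nodeEval (asgF x f) (dbl i))
            = ((if b = PC.idxOf C i then (1:ℝ) else 0) * C.nodeEval x c₂) *
                (C.augment V).nodeEval (asgF x w') (dbl c₁) := by
          intro w' hw'
          have hw'u : w' (Vtree.node l r) = b := by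
            rw [hw' _ hu_not_l, Function.update_self]
          rw [sumZ_congr (G := fun f =>
            ((C.augment V).nodeEval (asgF x w') (dbl c₁) *
              ((if b = PC.idxOf C i then (1:ℝ) else 0) * 1)) *
            (C.augment V).nodeEval (asgF x f) (dbl c₂)) ?_]
          · rw [sumZ_mul_left, IH c₂ (by omega) r hrV hs2 w']
            ring
          · intro g hg
            rw [hE g]
            have hgu : g (Vtree.node l r) = w' (Vtree.node l r) := hg _ hu_not_r
            have e1 : (C.augment V).nodeEval (asgF x g) (dbl c₁)
                = (C.augment V).nodeEval (asgF x w') (dbl c₁) := by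
              refine aug_dep hwf hsm hstr hns hVn x ((c₁:ℕ)+1) c₁ (by omega) l hlV hs1 g w'
                (fun t ht => hg t fun hmem => ?_)
              exact ne_lr hnodup_u ht (mem_innerList.1 hmem).1 rfl
            rw [e1, hgu, hw'u]
            ring
        rw [sumZ_congr (G := fun w' =>
          ((if b = PC.idxOf C i then (1:ℝ) else 0) * C.nodeEval x c₂) *
            (C.augment V).nodeEval (asgF x w') (dbl c₁)) (fun g hg => inner g hg)]
        rw [sumZ_mul_left, IH c₁ (by omega) l hlV hs1 (Function.update w (Vtree.node l r) b)]
        ring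
      rw [Finset.sum_congr rfl (fun b _ => hstep b)]
      have hidx : PC.idxOf C i ∈ Finset.range (C.prodCount (Vtree.node l r).varsFinset) := by
        rw [Finset.mem_range, ← hscope]
        exact idx_lt (by rw [hni]; rfl)
      rw [nodeEval_prod hwf x hni]
      simp only [List.map_cons, List.map_nil, List.prod_cons, List.prod_nil]
      simp only [ite_mul, one_mul, zero_mul]
      rw [Finset.sum_ite_eq' (Finset.range (C.prodCount (Vtree.node l r).varsFinset))
        (PC.idxOf C i), if_pos hidx]
      ring

end Main

end Aux


/-- Let `A` be a smooth and structured-decomposable probabilistic circuit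
over variables `X` respecting a vtree `V`, and let `A_aug` be its augmented PC over
`X ∪ Z`, where `Z = {Z_v : v an inner node of V}`.  Then for every assignment `x` of `X`,
`p_A(x) = Σ_z p_{A_aug}(x, z)`, where the sum ranges over all joint assignments `z` of the
latent variables `Z` (the latent `Z_v` ranging over `{0, …, |prod(v)| − 1}`). -/
theorem statement0 {n : ℕ} (Val : Fin n → Type) [∀ i, Fintype (Val i)]
    (C : PC (Fin n) Val) (V : Vtree (Fin n)) (hV : V.ValidOver Set.univ)
    (hpc : C.IsPCOver) (hsm : C.Smooth) (hdec : C.Decomposable) (hstr : C.StructuredBy V)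
    (x : ∀ i, Val i) :
    C.eval x =
      ∑ z ∈ V.innerFinset.pi (fun t => Finset.range (C.prodCount t.varsFinset)),
        (C.augment V).eval (augAssign V x z) := by
  obtain ⟨hwf, hnn, hns, hnl, halt, hroot⟩ := hpc
  have hVn : V.leavesList.Nodup := hV.1
  have hvars : V.varsFinset = Finset.univ := by
    ext y
    simp only [Finset.mem_univ, iff_true]
    exact Aux.mem_vars.2 ((hV.2 y).2 trivial)
  have hN : 0 < C.numNodes := by
    by_contra hN
    rw [PC.rootScope, dif_neg hN] at hroot
    obtain ⟨y, _⟩ := Aux.vars_nonempty V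
    have : y ∈ (∅ : Finset (Fin n)) := hroot ▸ Finset.mem_univ y
    simp at this
  set root : Fin C.numNodes := ⟨C.numNodes - 1, by omega⟩ with hrootdef
  have hscope_root : C.scope root = V.varsFinset := by
    rw [hvars, ← hroot, PC.rootScope, dif_pos hN]
  have hNaug : 0 < (C.augment V).numNodes := by show 0 < 2 * C.numNodes; omega
  have hrootaug : (⟨(C.augment V).numNodes - 1, by omega⟩ : Fin (C.augment V).numNodes)
      = Aux.dbl (V := V) root := by
    apply Fin.ext
    show 2 * C.numNodes - 1 = 2 * (C.numNodes - 1) + 1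
    omega
  rw [PC.eval, dif_pos hN]
  have hevalaug : ∀ z, (C.augment V).eval (augAssign V x z)
      = (C.augment V).nodeEval (augAssign V x z) (Aux.dbl (V := V) root) := by
    intro z; rw [PC.eval, dif_pos hNaug, hrootaug]
  calc C.nodeEval x root
      = Aux.sumZ (fun t => Finset.range (C.prodCount t.varsFinset)) (Aux.innerList V)
          (fun _ => 0)
          (fun f => (C.augment V).nodeEval (Aux.asgF x f) (Aux.dbl root)) :=
        (Aux.key_lemma hwf hsm hstr hns hVn x C.numNodes root (by omega) V (.refl V)
          hscope_root (fun _ => 0)).symm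
    _ = ∑ z ∈ V.innerFinset.pi (fun t => Finset.range (C.prodCount t.varsFinset)),
          (C.augment V).eval (augAssign V x z) := by
        rw [← Aux.pi_to_sumZ (fun t => Finset.range (C.prodCount t.varsFinset))
          (Aux.innerList V) (Aux.innerList_nodup hVn) (fun _ => 0)
          (fun f => (C.augment V).nodeEval (Aux.asgF x f) (Aux.dbl root))]
        refine Finset.sum_congr rfl fun z hz => ?_
        rw [hevalaug z, Aux.augAssign_eq V x z]
        rfl
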